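/- Fix θ₃ ∈ (0, π/2) and let s := π − θ₃. For θ₁ in the open interval where both θ₁ ∈ (0, π/2) and s − θ₁ ∈ (0, π/2), the function θ₁ ↦ (t(θ₁) − a(θ₁)) + (t(s − θ₁) − a(s − θ₁)) attains its maximum only at θ₁ = s/2, i.e., only when θ₁ = θ₂ where θ₂ = π − θ₁ − θ₃. -/

import Mathlib

open Real

/-- `t θ = tan θ`. -/
noncomputable def tFun (θ : ℝ) : ℝ := tan θ

/-- `a θ = (π/2 − θ)·tan²θ`. -/
noncomputable def aFun (θ : ℝ) : ℝ := (π / 2 - θ) * tan θ ^ 2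

namespace UncoveredTwoAngle

open Set

lemma aux2 : ∀ v ∈ Ioo (0:ℝ) π, 0 < sin v - v * cos v := by
  have hmono : StrictMonoOn (fun v => sin v - v * cos v) (Icc (0:ℝ) π) := by
    apply strictMonoOn_of_deriv_pos (convex_Icc 0 π) (by fun_prop)
    intro x hx
    rw [interior_Icc] at hx
    have hd : HasDerivAt (fun v => sin v - v * cos v) (x * sin x) x := by
      have := (Real.hasDerivAt_sin x).sub ((hasDerivAt_id x).mul (Real.hasDerivAt_cos x))
      exact this.congr_deriv (by simp only [id_eq]; ring)
    rw [hd.deriv]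
    exact mul_pos hx.1 (Real.sin_pos_of_pos_of_lt_pi hx.1 hx.2)
  intro v hv
  have := hmono (by constructor <;> simp [Real.pi_pos.le]) ⟨hv.1.le, hv.2.le⟩ hv.1
  simpa using this

lemma aux1 : ∀ v ∈ Ioo (0:ℝ) π, 0 < 2 - 2 * cos v - v * sin v := by
  have hmono : StrictMonoOn (fun v => 2 - 2 * cos v - v * sin v) (Icc (0:ℝ) π) := by
    apply strictMonoOn_of_deriv_pos (convex_Icc 0 π) (by fun_prop)
    intro x hx
    rw [interior_Icc] at hx
    have hd : HasDerivAt (fun v => 2 - 2 * cos v - v * sin v) (sin x - x * cos x) x := by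
      have := ((hasDerivAt_const x (2:ℝ)).sub ((hasDerivAt_const x (2:ℝ)).mul
        (Real.hasDerivAt_cos x))).sub ((hasDerivAt_id x).mul (Real.hasDerivAt_sin x))
      exact this.congr_deriv (by simp only [id_eq]; ring)
    rw [hd.deriv]
    exact aux2 x hx
  intro v hv
  have := hmono (by constructor <;> simp [Real.pi_pos.le]) ⟨hv.1.le, hv.2.le⟩ hv.1
  simpa using this

/-- The Cusa–Huygens inequality. -/
lemma cusa : ∀ v ∈ Ioo (0:ℝ) π, 3 * sin v < v * (2 + cos v) := by
  have hmono : StrictMonoOn (fun v => v * (2 + cos v) - 3 * sin v) (Icc (0:ℝ) π) := by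
    apply strictMonoOn_of_deriv_pos (convex_Icc 0 π) (by fun_prop)
    intro x hx
    rw [interior_Icc] at hx
    have hd : HasDerivAt (fun v => v * (2 + cos v) - 3 * sin v)
        (2 - 2 * cos x - x * sin x) x := by
      have := ((hasDerivAt_id x).mul ((hasDerivAt_const x (2:ℝ)).add
        (Real.hasDerivAt_cos x))).sub ((hasDerivAt_const x (3:ℝ)).mul (Real.hasDerivAt_sin x))
      exact this.congr_deriv (by simp only [id_eq, Pi.add_apply]; ring)
    rw [hd.deriv]
    exact aux1 x hx
  intro v hv
  have := hmono (by constructor <;> simp [Real.pi_pos.le]) ⟨hv.1.le, hv.2.le⟩ hv.1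
  simp only [Real.sin_zero, Real.cos_zero, mul_zero, zero_mul, mul_zero, sub_zero] at this
  linarith [this]

/-- The uncovered-area contribution of one angle. -/
noncomputable def gF (θ : ℝ) : ℝ := tan θ - (π / 2 - θ) * tan θ ^ 2

/-- The first derivative of `gF`. -/
noncomputable def g1F (θ : ℝ) : ℝ :=
  1 / cos θ ^ 2 + tan θ ^ 2 - (π / 2 - θ) * (2 * tan θ * (1 / cos θ ^ 2))

/-- The second derivative of `gF`. -/
noncomputable def g2F (θ : ℝ) : ℝ :=
  6 * tan θ * (1 / cos θ ^ 2) - (π / 2 - θ) * (2 / cos θ ^ 4 + 4 * tan θ ^ 2 / cos θ ^ 2)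

lemma hasDerivAt_gF {θ : ℝ} (h : cos θ ≠ 0) : HasDerivAt gF (g1F θ) θ := by
  have ht := Real.hasDerivAt_tan h
  have hu : HasDerivAt (fun θ : ℝ => π / 2 - θ) (-1) θ := by
    exact ((hasDerivAt_id' θ).const_sub (π / 2)).congr_deriv (by norm_num)
  have := ht.sub (hu.mul (ht.pow 2))
  refine this.congr_deriv ?_
  unfold g1F; simp only [Nat.cast_ofNat, pow_one, Pi.pow_apply]; ring

lemma hasDerivAt_g1F {θ : ℝ} (h : cos θ ≠ 0) : HasDerivAt g1F (g2F θ) θ := by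
  have hc2 : cos θ ^ 2 ≠ 0 := pow_ne_zero 2 h
  have ht := Real.hasDerivAt_tan h
  have hinv : HasDerivAt (fun θ : ℝ => (cos θ ^ 2)⁻¹)
      (-(2 * cos θ ^ 1 * (-sin θ)) / (cos θ ^ 2) ^ 2) θ :=
    ((Real.hasDerivAt_cos θ).pow 2).inv hc2
  have hone : HasDerivAt (fun θ : ℝ => 1 / cos θ ^ 2)
      (-(2 * cos θ ^ 1 * (-sin θ)) / (cos θ ^ 2) ^ 2) θ := by
    simpa [one_div] using hinv
  have hu : HasDerivAt (fun θ : ℝ => π / 2 - θ) (-1) θ := by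
    exact ((hasDerivAt_id' θ).const_sub (π / 2)).congr_deriv (by norm_num)
  have hprod : HasDerivAt (fun θ : ℝ => 2 * tan θ * (1 / cos θ ^ 2))
      ((2 * (1 / cos θ ^ 2)) * (1 / cos θ ^ 2)
        + 2 * tan θ * (-(2 * cos θ ^ 1 * (-sin θ)) / (cos θ ^ 2) ^ 2)) θ :=
    (((hasDerivAt_const θ (2:ℝ)).mul ht).congr_deriv (by ring)).mul hone
  have := (hone.add (ht.pow 2)).sub (hu.mul hprod)
  refine this.congr_deriv ?_
  norm_num only [Pi.pow_apply]
  unfold g2F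
  rw [Real.tan_eq_sin_div_cos]
  field_simp
  ring

lemma g2F_neg {θ : ℝ} (hθ : θ ∈ Ioo 0 (π / 2)) : g2F θ < 0 := by
  have hc : 0 < cos θ := Real.cos_pos_of_mem_Ioo ⟨by linarith [hθ.1, pi_pos], hθ.2⟩
  have hs : 0 < sin θ := Real.sin_pos_of_pos_of_lt_pi hθ.1 (by linarith [hθ.2, pi_pos])
  have hv : π - 2 * θ ∈ Ioo (0:ℝ) π := ⟨by linarith [hθ.2], by linarith [hθ.1]⟩
  have key := cusa _ hv
  rw [Real.sin_pi_sub, Real.cos_pi_sub, Real.sin_two_mul, Real.cos_two_mul] at key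
  have hpy := Real.sin_sq_add_cos_sq θ
  have hEq : g2F θ = 2 * (3 * sin θ * cos θ
      - (π / 2 - θ) * (1 + 2 * sin θ ^ 2)) / cos θ ^ 4 := by
    unfold g2F; rw [Real.tan_eq_sin_div_cos]; field_simp; ring
  rw [hEq]
  apply div_neg_of_neg_of_pos _ (by positivity)
  have h' : (π - 2 * θ) * (sin θ ^ 2 + cos θ ^ 2) = π - 2 * θ := by rw [hpy, mul_one]
  nlinarith [key, h']

lemma strictConcave_gF : StrictConcaveOn ℝ (Ioo 0 (π / 2)) gF := by
  have hcos : ∀ x ∈ Ioo (0:ℝ) (π / 2), cos x ≠ 0 := fun x hx =>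
    (Real.cos_pos_of_mem_Ioo ⟨by linarith [hx.1, pi_pos], hx.2⟩).ne'
  apply strictConcaveOn_of_deriv2_neg (convex_Ioo 0 (π / 2))
  · exact fun x hx => (hasDerivAt_gF (hcos x hx)).continuousAt.continuousWithinAt
  · intro x hx
    rw [interior_Ioo] at hx
    have hev : deriv gF =ᶠ[nhds x] g1F := by
      filter_upwards [isOpen_Ioo.mem_nhds hx] with y hy
      exact (hasDerivAt_gF (hcos y hy)).deriv
    simp only [Function.iterate_succ, Function.iterate_zero, Function.comp_apply, id_eq]
    rw [show deriv (deriv gF) x = g2F x from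
      hev.deriv_eq.trans (hasDerivAt_g1F (hcos x hx)).deriv]
    exact g2F_neg hx

end UncoveredTwoAngle

/-- With `θ₃ ∈ (0, π/2)` fixed and `s = π − θ₃`, on the set of `θ₁` with
`θ₁ ∈ (0, π/2)` and `s − θ₁ ∈ (0, π/2)`, the uncovered-area function
`θ₁ ↦ (t θ₁ − a θ₁) + (t (s − θ₁) − a (s − θ₁))` attains its maximum only at `θ₁ = s/2`. -/
theorem uncovered_two_angle_max (θ₃ : ℝ) (hθ₃ : θ₃ ∈ Set.Ioo 0 (π / 2)) (s : ℝ)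
    (hs : s = π - θ₃) (θ₁ : ℝ) (h₁ : θ₁ ∈ Set.Ioo 0 (π / 2))
    (h₂ : s - θ₁ ∈ Set.Ioo 0 (π / 2)) (hne : θ₁ ≠ s / 2) :
    (tFun θ₁ - aFun θ₁) + (tFun (s - θ₁) - aFun (s - θ₁)) <
      (tFun (s / 2) - aFun (s / 2)) + (tFun (s - s / 2) - aFun (s - s / 2)) := by
  have hne2 : θ₁ ≠ s - θ₁ := fun h => hne (by linarith)
  have hcc := UncoveredTwoAngle.strictConcave_gF.2 h₁ h₂ hne2
    (by norm_num : (0:ℝ) < 1/2) (by norm_num : (0:ℝ) < 1/2) (by norm_num)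
  simp only [smul_eq_mul] at hcc
  have hmid : (1/2 : ℝ) * θ₁ + (1/2 : ℝ) * (s - θ₁) = s / 2 := by ring
  rw [hmid] at hcc
  have hs2 : s - s / 2 = s / 2 := by ring
  rw [hs2]
  have hg : ∀ θ : ℝ, tFun θ - aFun θ = UncoveredTwoAngle.gF θ := fun θ => rfl
  rw [hg, hg, hg]
  linarith [hcc]
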